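/- Let K be any field, let X and Y be finite-dimensional vector spaces over K, and let α, β : X → Y be linear maps with β(ker α) ∩ im α = {0} in Y. Then the set of scalars t ∈ K for which ker(α + tβ) ≠ ker α ∩ ker β is finite; in particular, if K is infinite there exists t ∈ K with ker(α + tβ) = ker α ∩ ker β. (This is the paper's extension of the Perturbation Lemma to arbitrary fields, independent of characteristic.) -/

import Mathlib

/-- **Perturbation Lemma over an arbitrary field.**
If `β (ker α) ⊓ range α = ⊥`, then the set of scalars `t` with
`ker (α + t • β) ≠ ker α ⊓ ker β` is finite; in particular, over an infinite
field some `t` satisfies `ker (α + t • β) = ker α ⊓ ker β`. -/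
theorem perturbation_lemma_any_field
    (K : Type*) [Field K]
    (X Y : Type*) [AddCommGroup X] [Module K X] [FiniteDimensional K X]
    [AddCommGroup Y] [Module K Y] [FiniteDimensional K Y]
    (α β : X →ₗ[K] Y)
    (h : (LinearMap.ker α).map β ⊓ LinearMap.range α = ⊥) :
    {t : K | LinearMap.ker (α + t • β) ≠ LinearMap.ker α ⊓ LinearMap.ker β}.Finite ∧
      (Infinite K →
        ∃ t : K, LinearMap.ker (α + t • β) = LinearMap.ker α ⊓ LinearMap.ker β) := by
  set d := LinearMap.ker α ⊓ LinearMap.ker β with hd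
  have hle : ∀ t : K, d ≤ LinearMap.ker (α + t • β) := by
    intro t x hx
    obtain ⟨h1, h2⟩ := hx
    rw [LinearMap.mem_ker, LinearMap.add_apply, LinearMap.smul_apply,
      LinearMap.mem_ker.mp h1, LinearMap.mem_ker.mp h2, smul_zero, add_zero]
  obtain ⟨W, hW⟩ := Submodule.exists_isCompl (LinearMap.ker α)
  set π := ((LinearMap.ker α).map β).mkQ with hπ
  set α' : W →ₗ[K] (Y ⧸ (LinearMap.ker α).map β) := π ∘ₗ α ∘ₗ W.subtype with hα'
  have hα'inj : LinearMap.ker α' = ⊥ := by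
    rw [LinearMap.ker_eq_bot']
    intro w hw
    have hmem : α (w : X) ∈ (LinearMap.ker α).map β ⊓ LinearMap.range α := by
      constructor
      · have : π (α (w : X)) = 0 := hw
        rwa [hπ, Submodule.mkQ_apply, Submodule.Quotient.mk_eq_zero] at this
      · exact ⟨(w : X), rfl⟩
    rw [h] at hmem
    have hker : (w : X) ∈ LinearMap.ker α := hmem
    have : (w : X) ∈ (⊥ : Submodule K X) := hW.disjoint.le_bot ⟨hker, w.2⟩
    exact Subtype.ext this
  obtain ⟨l, hl⟩ := α'.exists_leftInverse_of_injective hα'inj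
  set E : Module.End K (Y ⧸ (LinearMap.ker α).map β) := (π ∘ₗ β ∘ₗ W.subtype) ∘ₗ l with hE
  -- Every nonzero "bad" scalar gives an eigenvalue of `E`.
  have key : ∀ t : K, t ≠ 0 → LinearMap.ker (α + t • β) ≠ d → (-t⁻¹) ∈ spectrum K E := by
    intro t ht hbad
    have hlt : d < LinearMap.ker (α + t • β) := lt_of_le_of_ne (hle t) (Ne.symm hbad)
    obtain ⟨x, hx, hxd⟩ := SetLike.exists_of_lt hlt
    have hx0 : α x + t • β x = 0 := by simpa [LinearMap.add_apply] using hx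
    have hxα : x ∉ LinearMap.ker α := by
      intro hk
      apply hxd
      have hβ : β x = 0 := by
        have : t • β x = 0 := by
          simpa [LinearMap.mem_ker.mp hk] using hx0
        exact (smul_eq_zero.mp this).resolve_left ht
      exact ⟨hk, hβ⟩
    obtain ⟨k, w, hk, hw, hkw⟩ := Submodule.codisjoint_iff_exists_add_eq.mp hW.codisjoint x
    have hwne : (⟨w, hw⟩ : W) ≠ 0 := by
      intro h0
      apply hxα
      have hw0 : w = 0 := congrArg Subtype.val h0
      rw [← hkw, hw0, add_zero]
      exact hk
    have hαx : α x = α w := by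
      rw [← hkw, map_add, LinearMap.mem_ker.mp hk, zero_add]
    have hπβx : π (β x) = π (β w) := by
      rw [← hkw, map_add, map_add]
      have : π (β k) = 0 := by
        rw [hπ, Submodule.mkQ_apply, Submodule.Quotient.mk_eq_zero]
        exact ⟨k, hk, rfl⟩
      rw [this, zero_add]
    have heig : π (β w) = (-t⁻¹) • π (α w) := by
      have h0 : π (α w) + t • π (β w) = 0 := by
        have := congrArg π hx0
        rwa [map_add, map_smul, hαx, hπβx, map_zero] at this
      have h1 : t • π (β w) = -π (α w) := by
        rw [eq_neg_iff_add_eq_zero, add_comm]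
        exact h0
      have h2 : π (β w) = t⁻¹ • (t • π (β w)) := by
        rw [smul_smul, inv_mul_cancel₀ ht, one_smul]
      rw [h2, h1, smul_neg, ← neg_smul]
    have hlw : l (α' ⟨w, hw⟩) = ⟨w, hw⟩ := by
      have := LinearMap.congr_fun hl ⟨w, hw⟩
      simpa using this
    have hEeq : E (α' ⟨w, hw⟩) = (-t⁻¹) • α' ⟨w, hw⟩ := by
      rw [hE]
      simp only [LinearMap.comp_apply, hlw]
      simpa [hα', LinearMap.comp_apply] using heig
    have hne : α' ⟨w, hw⟩ ≠ 0 := by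
      intro h0
      exact hwne (LinearMap.ker_eq_bot.mp hα'inj (by rw [h0, map_zero]))
    exact Module.End.hasEigenvalue_iff_mem_spectrum.mp
      (Module.End.hasEigenvalue_of_hasEigenvector
        ⟨Module.End.mem_eigenspace_iff.mpr hEeq, hne⟩)
  have hfin : {t : K | LinearMap.ker (α + t • β) ≠ d}.Finite := by
    have hsub : {t : K | LinearMap.ker (α + t • β) ≠ d} ⊆
        insert (0 : K) ((fun μ : K => -μ⁻¹) '' spectrum K E) := by
      intro t ht
      by_cases ht0 : t = 0
      · exact Or.inl ht0
      · refine Or.inr ⟨-t⁻¹, key t ht0 ht, ?_⟩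
        show -(-t⁻¹)⁻¹ = t
        rw [inv_neg, inv_inv, neg_neg]
    exact Set.Finite.subset (((Module.End.finite_spectrum E).image _).insert 0) hsub
  refine ⟨hfin, fun hK => ?_⟩
  obtain ⟨t, ht⟩ := hfin.infinite_compl.nonempty
  exact ⟨t, not_not.mp ht⟩
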